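/- The mutated cluster variable x'_k obtained from an algebraically independent family (x_1,...,x_n) by the exchange relation is nonzero, and the new cluster (x_1,...,x'_k,...,x_n) is again algebraically independent over K. -/

import Mathlib

/-- Fomin–Zelevinsky matrix mutation at index `k`. -/
def mutate {n : ℕ} (k : Fin n) (B : Matrix (Fin n) (Fin n) ℤ) : Matrix (Fin n) (Fin n) ℤ :=
  Matrix.of fun i j =>
    if i = k ∨ j = k then -B i j
    else B i j + Int.sign (B i k) * max 0 (B i k * B k j)

/-- `B` is skew-symmetrizable: there is a positive diagonal `d` with `dᵢ bᵢⱼ = -dⱼ bⱼᵢ`. -/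
def IsSkewSymmetrizable {n : ℕ} (B : Matrix (Fin n) (Fin n) ℤ) : Prop :=
  ∃ d : Fin n → ℤ, (∀ i, 0 < d i) ∧ ∀ i j, d i * B i j = -(d j * B j i)

/-- The exchange relation: the new cluster variable obtained by mutating the
cluster `x` with exchange matrix `B` at index `k`. -/
noncomputable def exch {n : ℕ} {F : Type*} [Field F] (B : Matrix (Fin n) (Fin n) ℤ)
    (k : Fin n) (x : Fin n → F) : F :=
  ((∏ j, x j ^ (B j k).toNat) + ∏ j, x j ^ (-B j k).toNat) / x k

/-- Seed mutation at index `k`: exchange relation on the cluster, matrix mutation on `B`. -/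
noncomputable def seedMut {n : ℕ} {F : Type*} [Field F] (k : Fin n)
    (s : (Fin n → F) × Matrix (Fin n) (Fin n) ℤ) :
    (Fin n → F) × Matrix (Fin n) (Fin n) ℤ :=
  (Function.update s.1 k (exch s.2 k s.1), mutate k s.2)

/-- Action of a mutation sequence (list in order of application, leftmost first). -/
noncomputable def seqAct {n : ℕ} {F : Type*} [Field F] (l : List (Fin n))
    (s : (Fin n → F) × Matrix (Fin n) (Fin n) ℤ) :
    (Fin n → F) × Matrix (Fin n) (Fin n) ℤ :=
  l.foldl (fun t k => seedMut k t) s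

open MvPolynomial in
private lemma aux_sum_ne_zero' {n : ℕ} {K F : Type*} [Field K] [CharZero K] [Field F]
    [Algebra K F] (x : Fin n → F) (hx : AlgebraicIndependent K x)
    (e f : Fin n → ℕ) : (∏ j, x j ^ e j) + ∏ j, x j ^ f j ≠ 0 := by
  classical
  set u : Fin n →₀ ℕ := Finsupp.equivFunOnFinite.symm e with hu
  set v : Fin n →₀ ℕ := Finsupp.equivFunOnFinite.symm f with hv
  set p : MvPolynomial (Fin n) K := monomial u 1 + monomial v 1 with hpdef
  have hp : p ≠ 0 := by
    intro h
    have h2 := congrArg (coeff u) h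
    rw [hpdef] at h2
    simp only [coeff_add, coeff_monomial, coeff_zero, if_pos rfl] at h2
    split_ifs at h2 <;> norm_num at h2
  have h2 : aeval x p = (∏ j, x j ^ e j) + ∏ j, x j ^ f j := by
    simp [hpdef, aeval_monomial, Finsupp.prod_fintype, hu, hv]
  rw [← h2]
  intro h0
  exact hp (algebraicIndependent_iff_injective_aeval.mp hx (by rw [h0, map_zero]))

private lemma aux_transcendental_div {F : Type*} [Field F] {K : Type*} [Field K] [Algebra K F]
    (A : Subalgebra K F) (c : A) (hc : (c : F) ≠ 0) (t : F) (ht : t ≠ 0)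
    (htr : Transcendental A t) : Transcendental A ((c : F) / t) := by
  intro ⟨p, hp, hroot⟩
  apply htr
  have ha : (c : F) / t ≠ 0 := div_ne_zero hc ht
  have := invertibleOfNonzero ha
  refine ⟨(p.reverse).scaleRoots c, Polynomial.scaleRoots_ne_zero (by simpa using hp) c, ?_⟩
  have h1 : Polynomial.eval₂ (algebraMap A F) (⅟((c : F) / t)) p.reverse = 0 := by
    rw [Polynomial.eval₂_reverse_eq_zero_iff]
    rwa [Polynomial.aeval_def] at hroot
  have h2 := Polynomial.scaleRoots_eval₂_mul (algebraMap A F) (⅟((c : F) / t)) c (p := p.reverse)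
  rw [h1, mul_zero] at h2
  have h3 : (algebraMap A F) c * ⅟((c : F) / t) = t := by
    rw [invOf_eq_inv (↑c / t)]
    show (c : F) * ((c : F)/t)⁻¹ = t
    field_simp
  rw [h3] at h2
  rw [Polynomial.aeval_def]
  exact h2

/-- The mutated cluster variable is nonzero, and the mutated cluster is again
algebraically independent over `K`. -/
theorem exch_ne_zero_and_algIndep {n : ℕ} {K F : Type*} [Field K] [CharZero K] [Field F]
    [Algebra K F] (B : Matrix (Fin n) (Fin n) ℤ) (hB : IsSkewSymmetrizable B)
    (x : Fin n → F) (hx : AlgebraicIndependent K x) (k : Fin n) :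
    exch B k x ≠ 0 ∧ AlgebraicIndependent K (Function.update x k (exch B k x)) := by
  classical
  obtain ⟨d, hdpos, hskew⟩ := hB
  have hBkk : B k k = 0 := by
    have h := hskew k k
    have h2 : d k * B k k = 0 := by linarith
    rcases mul_eq_zero.mp h2 with h3 | h3
    · exact absurd h3 (hdpos k).ne'
    · exact h3
  have hxne : ∀ j, x j ≠ 0 := fun j hj => hx.transcendental j (hj ▸ isAlgebraic_zero)
  set P := ∏ j, x j ^ (B j k).toNat with hP
  set Q := ∏ j, x j ^ (-B j k).toNat with hQ
  have hc : P + Q ≠ 0 := aux_sum_ne_zero' x hx _ _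
  have hexch : exch B k x = (P + Q) / x k := rfl
  have hne : exch B k x ≠ 0 := by rw [hexch]; exact div_ne_zero hc (hxne k)
  refine ⟨hne, ?_⟩
  set x' : {j : Fin n // j ≠ k} → F := fun j => x j with hx'def
  have hx' : AlgebraicIndependent K x' := hx.comp _ Subtype.val_injective
  set A := Algebra.adjoin K (Set.range x') with hA
  have hmem : ∀ j, j ≠ k → x j ∈ A := fun j hj => Algebra.subset_adjoin ⟨⟨j, hj⟩, rfl⟩
  have hPQ : P + Q ∈ A := by
    have hfac : ∀ (m : Fin n → ℕ), m k = 0 → (∏ j, x j ^ m j) ∈ A := by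
      intro m hm
      refine Subalgebra.prod_mem A fun j _ => ?_
      by_cases h : j = k
      · subst h; rw [hm]; simpa using Subalgebra.one_mem A
      · exact Subalgebra.pow_mem A (hmem j h) _
    exact Subalgebra.add_mem A
      (hfac _ (by simp [hBkk])) (hfac _ (by simp [hBkk]))
  set g : Option {j : Fin n // j ≠ k} → Fin n := fun o => o.elim k Subtype.val with hg
  have hginj : Function.Injective g := by
    rintro (_ | ⟨a, ha⟩) (_ | ⟨b, hb⟩) h
    · rfl
    · exact absurd h.symm hb
    · exact absurd h ha
    · simpa [hg, Subtype.ext_iff] using h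
  have h1 : AlgebraicIndependent K (fun o : Option {j : Fin n // j ≠ k} => o.elim (x k) x') := by
    have := hx.comp g hginj
    convert this using 1
    funext o
    cases o <;> rfl
  have htk : Transcendental A (x k) := (hx'.option_iff_transcendental (x k)).mp h1
  have htra : Transcendental A (exch B k x) := by
    rw [hexch]
    exact aux_transcendental_div A ⟨P + Q, hPQ⟩ hc (x k) (hxne k) htk
  have h2 : AlgebraicIndependent K (fun o : Option {j : Fin n // j ≠ k} => o.elim (exch B k x) x') :=
    (hx'.option_iff_transcendental _).mpr htra
  set g' : Fin n → Option {j : Fin n // j ≠ k} :=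
    fun j => if h : j = k then none else some ⟨j, h⟩ with hg'
  have hg'inj : Function.Injective g' := by
    intro a b h
    by_cases ha : a = k <;> by_cases hb : b = k
    · rw [ha, hb]
    · exact absurd h (by simp [hg', ha, hb])
    · exact absurd h (by simp [hg', ha, hb])
    · simpa [hg', ha, hb, Subtype.ext_iff] using h
  have h3 := h2.comp g' hg'inj
  convert h3 using 1
  funext j
  by_cases h : j = k
  · subst h; simp [hg', Function.update]
  · simp [hg', h, Function.update, hx'def]
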